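/- The one-stage SVERK method Y_1 = e^{-hM} y_n + (h/2) f(Y_1), y_{n+1} = e^{-hM} y_n + h f(Y_1), applied to a linear Hamiltonian system y' = J^{-1}Q y + J^{-1}R y (i.e., M = -J^{-1}Q and f(y) = J^{-1}R y with Q, R symmetric), is symplectic: the transition matrix S defined by y_{n+1} = S y_n satisfies S^T J S = J. -/

import Mathlib

open Matrix

/-- the one-stage SVERK method applied to a linear Hamiltonian system
is symplectic: its transition matrix `S` satisfies `Sᵀ J S = J`. -/
theorem sverk1_linear_symplectic (d : ℕ)
    (J : Matrix (Fin d ⊕ Fin d) (Fin d ⊕ Fin d) ℝ)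
    (hJ : J = Matrix.fromBlocks (0 : Matrix (Fin d) (Fin d) ℝ) 1 (-1) 0)
    (Q R M : Matrix (Fin d ⊕ Fin d) (Fin d ⊕ Fin d) ℝ)
    (hQ : Q.IsSymm) (hR : R.IsSymm) (hM : M = -(J⁻¹ * Q))
    (h : ℝ) (hh : 0 < h)
    (hinv : IsUnit (1 - (h / 2) • (J⁻¹ * R)))
    (S : Matrix (Fin d ⊕ Fin d) (Fin d ⊕ Fin d) ℝ)
    (hS : S = NormedSpace.exp (-h • M) +
      h • (J⁻¹ * R * (1 - (h / 2) • (J⁻¹ * R))⁻¹ * NormedSpace.exp (-h • M))) :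
    Sᵀ * J * S = J := by
  have hJT : Jᵀ = -J := by
    subst hJ
    simp [Matrix.fromBlocks_transpose, Matrix.fromBlocks_neg]
  have hJJ : J * J = -1 := by
    subst hJ
    simp [Matrix.fromBlocks_multiply, ← Matrix.fromBlocks_one, Matrix.fromBlocks_neg]
  have hJJ1 : J * -J = 1 := by rw [mul_neg, hJJ, neg_neg]
  have hJJ1' : -J * J = 1 := by rw [neg_mul, hJJ, neg_neg]
  have hJinv : J⁻¹ = -J := Matrix.inv_eq_right_inv hJJ1
  have hJunit : IsUnit J := ⟨⟨J, -J, hJJ1, hJJ1'⟩, rfl⟩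
  set A := J⁻¹ * R with hA
  have hAT : Aᵀ = R * J := by
    rw [hA, transpose_mul, hJinv, transpose_neg, hJT, neg_neg, hR.eq]
  have hJA : J * A = R := by
    rw [hA, hJinv, neg_mul, mul_neg, ← mul_assoc, hJJ, neg_one_mul, neg_neg]
  have hATJ : Aᵀ * J = -R := by rw [hAT, mul_assoc, hJJ, mul_neg_one]
  -- exponential part
  have hMval : M = J * Q := by rw [hM, hJinv, neg_mul, neg_neg]
  have hMT : Mᵀ = -(Q * J) := by rw [hMval, transpose_mul, hQ.eq, hJT, mul_neg]
  have hconj : J * (h • M) * J⁻¹ = h • (Q * J) := by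
    rw [hJinv, hMval, mul_smul_comm, smul_mul_assoc, ← mul_assoc, hJJ]
    simp [neg_one_mul, neg_mul, mul_neg]
  have hMTfull : (-h • M)ᵀ = J * (h • M) * J⁻¹ := by
    rw [hconj, transpose_smul, hMT]
    rw [neg_smul, smul_neg, neg_neg]
  set E := NormedSpace.exp (-h • M) with hE
  have hET : Eᵀ = J * NormedSpace.exp (h • M) * J⁻¹ := by
    rw [hE, ← Matrix.exp_transpose, hMTfull, Matrix.exp_conj _ _ hJunit]
  have hEJE : Eᵀ * J * E = J := by
    rw [hET, hJinv, mul_assoc (J * NormedSpace.exp (h • M)) (-J) J, hJJ1',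
      mul_one, mul_assoc, ← Matrix.exp_add_of_commute _ _ (((Commute.refl M).smul_left h).smul_right (-h))]
    rw [neg_smul, add_neg_cancel, NormedSpace.exp_zero, mul_one]
  -- algebraic part
  set C := (1 : Matrix (Fin d ⊕ Fin d) (Fin d ⊕ Fin d) ℝ) - (h / 2) • A with hC
  have hCdet : IsUnit C.det := (Matrix.isUnit_iff_isUnit_det _).mp hinv
  have hKC : C⁻¹ * C = 1 := Matrix.nonsing_inv_mul _ hCdet
  have hCK : C * C⁻¹ = 1 := Matrix.mul_nonsing_inv _ hCdet
  set B := (1 : Matrix (Fin d ⊕ Fin d) (Fin d ⊕ Fin d) ℝ) + h • (A * C⁻¹) with hB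
  have hSB : S = B * E := by
    rw [hS, hB, add_mul, one_mul, smul_mul_assoc, mul_assoc]
  have hBC : B * C = 1 + (h / 2) • A := by
    rw [hB, add_mul, one_mul, smul_mul_assoc, mul_assoc, hKC, mul_one, hC]
    module
  have hmid : (B * C)ᵀ * J * (B * C) = Cᵀ * J * C := by
    rw [hBC, hC]
    simp only [transpose_add, transpose_sub, transpose_smul, transpose_one,
      add_mul, mul_add, sub_mul, mul_sub, smul_mul_assoc, mul_smul_comm,
      one_mul, mul_one, smul_smul, hATJ, hJA, mul_assoc]
    module
  have hBJB : Bᵀ * J * B = J := by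
    have h1 : Cᵀ * (Bᵀ * J * B) * C = Cᵀ * J * C := by
      calc Cᵀ * (Bᵀ * J * B) * C = (B * C)ᵀ * J * (B * C) := by
            rw [transpose_mul]; noncomm_ring
        _ = Cᵀ * J * C := hmid
    have hCTdet : IsUnit Cᵀ.det := by rwa [Matrix.det_transpose]
    have h2 := congrArg (fun X => (Cᵀ)⁻¹ * X * C⁻¹) h1
    simpa [mul_assoc, ← mul_assoc ((Cᵀ)⁻¹) (Cᵀ), Matrix.nonsing_inv_mul _ hCTdet,
      hCK, Matrix.mul_nonsing_inv _ hCdet] using h2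
  rw [hSB, transpose_mul]
  calc Eᵀ * Bᵀ * J * (B * E) = Eᵀ * (Bᵀ * J * B) * E := by noncomm_ring
    _ = Eᵀ * J * E := by rw [hBJB]
    _ = J := hEJE
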